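/- If a finite well-formed history F is linearizable with respect to a sequential object O and a finite well-formed history E is similar to F, then E is linearizable with respect to O. -/

import Mathlib

namespace RV

inductive Event where
  | inv (p : ℕ) (op : ℕ)
  | res (p : ℕ) (op : ℕ)
deriving DecidableEq

abbrev History := List Event

def Event.proc : Event → ℕ
  | .inv p _ => p
  | .res p _ => p

def Event.op : Event → ℕ
  | .inv _ o => o
  | .res _ o => o

def Event.isInv : Event → Bool
  | .inv _ _ => true
  | .res _ _ => false

/-- The subsequence of events of process `p`. -/
def proj (E : History) (p : ℕ) : History := E.filter (fun e => e.proc == p)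

/-- Two histories are equivalent if every process has the same subsequence of events. -/
def Equivalent (E F : History) : Prop := ∀ p, proj E p = proj F p

/-- Operation `a` precedes operation `b` in `E`: the response of `a` occurs
before the invocation of `b`. -/
def prec (E : History) (a b : ℕ) : Prop :=
  ∃ i j p q, i < j ∧ E[(i : ℕ)]? = some (Event.res p a) ∧ E[(j : ℕ)]? = some (Event.inv q b)

/-- A single process' subsequence alternates invocation, matching response, ... ,
possibly ending with a pending invocation. -/
inductive Alt : History → Prop where
  | nil : Alt []
  | pend (p o : ℕ) : Alt [Event.inv p o]
  | step (p o : ℕ) (l : History) : Alt l → Alt (Event.inv p o :: Event.res p o :: l)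

/-- Well-formed history: per-process alternation, and every operation identifier is
invoked at most once and responded at most once. -/
def WellFormed (E : History) : Prop :=
  (∀ p, Alt (proj E p)) ∧
  (∀ o, E.countP (fun e => e.isInv && e.op == o) ≤ 1) ∧
  (∀ o, E.countP (fun e => !e.isInv && e.op == o) ≤ 1)

def CompleteIn (E : History) (o : ℕ) : Prop :=
  (∃ p, Event.inv p o ∈ E) ∧ ∃ q, Event.res q o ∈ E

def PendingIn (E : History) (o : ℕ) : Prop :=
  (∃ p, Event.inv p o ∈ E) ∧ ∀ q, Event.res q o ∉ E

def hasRes (E : History) (o : ℕ) : Bool := E.any (fun e => !e.isInv && e.op == o)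

/-- `comp E` removes the invocations of pending operations. -/
def comp (E : History) : History := E.filter (fun e => !e.isInv || hasRes E e.op)

/-- `E'` extends `E` by appending responses to some pending operations. -/
def IsExtension (E E' : History) : Prop :=
  ∃ rs : History, E' = E ++ rs ∧
    (∀ e ∈ rs, e.isInv = false ∧ PendingIn E e.op ∧ Event.inv e.proc e.op ∈ E) ∧
    rs.Pairwise (fun a b => a.op ≠ b.op)

/-- Sequential histories: alternating invocation/matching-response pairs. -/
inductive Seq : History → Prop where
  | nil : Seq []
  | step (p o : ℕ) (l : History) : Seq l → Seq (Event.inv p o :: Event.res p o :: l)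

/-- `E` is linearizable w.r.t. the sequential object `O` (a set of sequential
histories): there is an extension `E'` of `E` and `S ∈ O` such that `comp E'`
and `S` are equivalent and `<_{comp E'} ⊆ <_S`. -/
def Linearizable (O : Set History) (E : History) : Prop :=
  ∃ E', IsExtension E E' ∧ ∃ S ∈ O, Equivalent (comp E') S ∧
    ∀ a b, prec (comp E') a b → prec S a b

/-- `E` is similar to `F`: some history `E'`, obtained from `E` by appending
responses to some pending operations and removing the invocations of some other
pending operations, is equivalent to `F` and satisfies `≺_{E'} ⊆ ≺_F`. -/
def Similar (E F : History) : Prop :=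
  ∃ (keep : Event → Bool) (rs : History),
    (∀ e ∈ E, keep e = false → e.isInv = true ∧ PendingIn E e.op) ∧
    (∀ e ∈ rs, e.isInv = false ∧ PendingIn E e.op ∧ Event.inv e.proc e.op ∈ E ∧
      keep (Event.inv e.proc e.op) = true) ∧
    rs.Pairwise (fun a b => a.op ≠ b.op) ∧
    Equivalent (E.filter keep ++ rs) F ∧
    (∀ a b, prec (E.filter keep ++ rs) a b → prec F a b)

/-- The class `GenLin`: sets of well-formed histories closed under prefixes and
under similarity. -/
def GenLin (O : Set History) : Prop :=
  (∀ F ∈ O, ∀ E : History, E <+: F → E ∈ O) ∧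
  (∀ F ∈ O, ∀ E : History, Similar E F → E ∈ O)


lemma pair_sublist {α : Type*} {x y : α} {l : List α} :
    List.Sublist [x, y] l ↔ ∃ i j : ℕ, i < j ∧ l[i]? = some x ∧ l[j]? = some y := by
  constructor
  · intro h
    induction l with
    | nil => simp at h
    | cons a t ih =>
      cases h with
      | cons _ h =>
        obtain ⟨i, j, hij, hi, hj⟩ := ih h
        exact ⟨i+1, j+1, by omega, by simpa using hi, by simpa using hj⟩
      | cons_cons _ h =>
        obtain ⟨j, hj⟩ := List.mem_iff_getElem?.mp (List.singleton_sublist.mp h)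
        exact ⟨0, j+1, by omega, by simp, by simpa using hj⟩
  · rintro ⟨i, j, hij, hi, hj⟩
    have hil : i < l.length := by
      by_contra h
      rw [List.getElem?_eq_none (by omega)] at hi; cases hi
    have hdrop : l.drop i = x :: l.drop (i+1) := by
      rw [List.drop_eq_getElem_cons hil]
      congr 1
      exact (List.getElem?_eq_some_iff.mp hi).2
    have hy : y ∈ l.drop (i+1) := by
      have : (l.drop (i+1))[j - (i+1)]? = some y := by
        rw [List.getElem?_drop]; rwa [Nat.add_sub_cancel' (by omega)]
      exact List.mem_iff_getElem?.mpr ⟨_, this⟩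
    have h1 : List.Sublist [x, y] (x :: l.drop (i+1)) :=
      List.Sublist.cons₂ x (List.singleton_sublist.mpr hy)
    rw [← hdrop] at h1
    exact h1.trans (List.drop_sublist i l)

lemma prec_iff_sublist {l : History} {a b : ℕ} :
    prec l a b ↔ ∃ p q, List.Sublist [Event.res p a, Event.inv q b] l := by
  constructor
  · rintro ⟨i, j, p, q, hij, hi, hj⟩
    exact ⟨p, q, pair_sublist.mpr ⟨i, j, hij, hi, hj⟩⟩
  · rintro ⟨p, q, h⟩
    obtain ⟨i, j, hij, hi, hj⟩ := pair_sublist.mp h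
    exact ⟨i, j, p, q, hij, hi, hj⟩

lemma mem_of_equiv {l l' : History} (h : Equivalent l l') {e : Event} :
    e ∈ l ↔ e ∈ l' := by
  have h1 : e ∈ l ↔ e ∈ proj l e.proc := by
    simp [proj, List.mem_filter]
  have h2 : e ∈ l' ↔ e ∈ proj l' e.proc := by
    simp [proj, List.mem_filter]
  rw [h1, h2, h e.proc]

lemma eq_of_countP_le_one {l : History} {p : Event → Bool} (h : l.countP p ≤ 1)
    {a b : Event} (ha : a ∈ l) (hb : b ∈ l) (hpa : p a = true) (hpb : p b = true) :
    a = b := by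
  rw [List.countP_eq_length_filter] at h
  have ha' : a ∈ l.filter p := List.mem_filter.mpr ⟨ha, hpa⟩
  have hb' : b ∈ l.filter p := List.mem_filter.mpr ⟨hb, hpb⟩
  match hf : l.filter p with
  | [] => rw [hf] at ha'; simp at ha'
  | [c] =>
    rw [hf] at ha' hb'
    simp only [List.mem_singleton] at ha' hb'
    rw [ha', hb']
  | c :: d :: t => rw [hf] at h; simp at h

lemma proj_append (l l' : History) (p : ℕ) : proj (l ++ l') p = proj l p ++ proj l' p :=
  List.filter_append _ _

lemma proj_filter (P : Event → Bool) (l : History) (p : ℕ) :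
    proj (l.filter P) p = (proj l p).filter P := by
  simp only [proj, List.filter_filter]
  exact List.filter_congr (fun x _ => Bool.and_comm _ _)


lemma hasRes_iff {l : History} {o : ℕ} : hasRes l o = true ↔ ∃ q, Event.res q o ∈ l := by
  unfold hasRes
  rw [List.any_eq_true]
  constructor
  · rintro ⟨e, he, hp⟩
    cases e with
    | inv p op => simp [Event.isInv] at hp
    | res p op =>
      simp only [Event.isInv, Event.op, Bool.not_false, Bool.true_and, beq_iff_eq] at hp
      exact ⟨p, hp ▸ he⟩
  · rintro ⟨q, hq⟩
    exact ⟨_, hq, by simp [Event.isInv, Event.op]⟩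

lemma Event.eq_inv {e : Event} (h : e.isInv = true) : e = Event.inv e.proc e.op := by
  cases e <;> simp_all [Event.isInv, Event.proc, Event.op]

lemma Event.eq_res {e : Event} (h : e.isInv = false) : e = Event.res e.proc e.op := by
  cases e <;> simp_all [Event.isInv, Event.proc, Event.op]

/-- If `F` is linearizable w.r.t. a sequential object `O` and `E` is
similar to `F`, then `E` is linearizable w.r.t. `O`. -/
theorem linearizability_similarity_closed (O : Set History) (hO : ∀ S ∈ O, Seq S)
    (F E : History) (hwfF : WellFormed F) (hwfE : WellFormed E)
    (hlin : Linearizable O F) (hsim : Similar E F) : Linearizable O E := by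
  obtain ⟨keep, rs, hkeep, hrs, hrsPW, hequiv, hprec⟩ := hsim
  obtain ⟨F'', hext, S, hS, hequivS, hprecS⟩ := hlin
  obtain ⟨rs', hF'', hrs', hrs'PW⟩ := hext
  subst hF''
  obtain ⟨-, hEinv, -⟩ := hwfE
  have hkeepRes : ∀ e ∈ E, e.isInv = false → keep e = true := by
    intro e he hres
    by_contra h
    have h1 := (hkeep e he (by simpa using h)).1
    rw [h1] at hres; exact Bool.noConfusion hres
  have hmemE'F : ∀ e : Event, e ∈ E.filter keep ++ rs ↔ e ∈ F :=
    fun e => mem_of_equiv hequiv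
  have hresEF : ∀ e : Event, e ∈ E → e.isInv = false → e ∈ F := by
    intro e he hres
    exact (hmemE'F e).mp (List.mem_append_left _ (List.mem_filter.mpr ⟨he, hkeepRes e he hres⟩))
  have hrsF : ∀ e ∈ rs, e ∈ F := fun e he => (hmemE'F e).mp (List.mem_append_right _ he)
  have hrs'inv : ∀ e ∈ rs', keep (Event.inv e.proc e.op) = true ∧ Event.inv e.proc e.op ∈ E := by
    intro e he
    have hmem : Event.inv e.proc e.op ∈ E.filter keep ++ rs := (hmemE'F _).mpr (hrs' e he).2.2
    rcases List.mem_append.mp hmem with h | h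
    · exact ⟨(List.mem_filter.mp h).2, (List.mem_filter.mp h).1⟩
    · exact absurd (hrs _ h).1 (by simp [Event.isInv])
  have hinvUniq : ∀ p p' o, Event.inv p o ∈ E → Event.inv p' o ∈ E →
      (Event.inv p o : Event) = Event.inv p' o := by
    intro p p' o h h'
    exact eq_of_countP_le_one (hEinv o) h h'
      (by simp [Event.isInv, Event.op]) (by simp [Event.isInv, Event.op])
  have hnoresE : ∀ o, PendingIn F o → ∀ q, Event.res q o ∉ E := by
    intro o hp q hq
    obtain ⟨-, hnr⟩ := hp
    exact hnr q (hresEF _ hq rfl)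
  set rs2 : History := rs ++ rs' with hrs2
  have hkeepFalse : ∀ e ∈ E, keep e = false → ∀ q, Event.res q e.op ∉ E ++ rs2 := by
    intro e he hkf q hq
    obtain ⟨hinv, hpend⟩ := hkeep e he hkf
    obtain ⟨-, hpend2⟩ := hpend
    have heinv : e = Event.inv e.proc e.op := Event.eq_inv hinv
    rcases List.mem_append.mp hq with h | h
    · exact hpend2 q h
    · rcases List.mem_append.mp h with h | h
      · have h1 := hrs _ h
        have hkt : keep (Event.inv q e.op) = true := h1.2.2.2
        have hinvE : (Event.inv q e.op : Event) ∈ E := h1.2.2.1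
        have heq : (Event.inv q e.op : Event) = e := by
          rw [heinv] at he ⊢
          exact hinvUniq q e.proc e.op hinvE he
        rw [heq, hkf] at hkt; exact Bool.noConfusion hkt
      · have h1 := hrs'inv _ h
        have hinvE : (Event.inv q e.op : Event) ∈ E := h1.2
        have hkt : keep (Event.inv q e.op) = true := h1.1
        have heq : (Event.inv q e.op : Event) = e := by
          rw [heinv] at he ⊢
          exact hinvUniq q e.proc e.op hinvE he
        rw [heq, hkf] at hkt; exact Bool.noConfusion hkt
  have hresIff : ∀ q o, Event.res q o ∈ E ++ rs2 ↔ Event.res q o ∈ F ++ rs' := by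
    intro q o
    constructor
    · intro h
      rcases List.mem_append.mp h with h | h
      · exact List.mem_append_left _ (hresEF _ h rfl)
      · rcases List.mem_append.mp h with h | h
        · exact List.mem_append_left _ (hrsF _ h)
        · exact List.mem_append_right _ h
    · intro h
      rcases List.mem_append.mp h with h | h
      · have h' : Event.res q o ∈ E.filter keep ++ rs := (hmemE'F _).mpr h
        rcases List.mem_append.mp h' with h'' | h''
        · exact List.mem_append_left _ (List.mem_filter.mp h'').1
        · exact List.mem_append_right _ (List.mem_append_left _ h'')
      · exact List.mem_append_right _ (List.mem_append_right _ h)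
  have hhasRes : ∀ o, hasRes (E ++ rs2) o = hasRes (F ++ rs') o := by
    intro o
    rcases Bool.eq_false_or_eq_true (hasRes (F ++ rs') o) with h | h
    · rw [h]
      obtain ⟨q, hq⟩ := hasRes_iff.mp h
      exact hasRes_iff.mpr ⟨q, (hresIff q o).mpr hq⟩
    · rw [h]
      rw [Bool.eq_false_iff, Ne, hasRes_iff]
      rintro ⟨q, hq⟩
      have h3 : Event.res q o ∈ F ++ rs' := (hresIff q o).mp hq
      have h2 : hasRes (F ++ rs') o = true := hasRes_iff.mpr ⟨q, h3⟩
      rw [h] at h2; exact Bool.noConfusion h2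
  set P : Event → Bool := fun e => !e.isInv || hasRes (E ++ rs2) e.op with hPdef
  have hPres : ∀ e : Event, e.isInv = false → P e = true := by
    intro e h; simp [hPdef, h]
  have hcompE : comp (E ++ rs2) = (E ++ rs2).filter P := by rw [hPdef]; rfl
  have hcompF : comp (F ++ rs') = (F ++ rs').filter P := by
    unfold comp
    apply List.filter_congr
    intro e _
    rw [hPdef]
    simp only
    rw [← hhasRes e.op]
  have hfrs : rs.filter P = rs := List.filter_eq_self.mpr (fun e he => hPres e (hrs e he).1)
  have hfrs' : rs'.filter P = rs' := List.filter_eq_self.mpr (fun e he => hPres e (hrs' e he).1)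
  have hfE : E.filter P = (E.filter keep).filter P := by
    rw [List.filter_filter]
    apply List.filter_congr
    intro e he
    cases hk : keep e with
    | true => simp [hk]
    | false =>
      have h1 := hkeep e he hk
      have h2 : hasRes (E ++ rs2) e.op = false := by
        rw [Bool.eq_false_iff, Ne, hasRes_iff]
        rintro ⟨q, hq⟩
        exact hkeepFalse e he hk q hq
      simp [hPdef, h1.1, h2]
  have hcompE2 : comp (E ++ rs2) = ((E.filter keep ++ rs) ++ rs').filter P := by
    rw [hcompE, hrs2]
    simp only [List.filter_append, List.append_assoc]
    rw [hfE]
  refine ⟨E ++ rs2, ⟨rs2, rfl, ?_, ?_⟩, S, hS, ?_, ?_⟩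
  · intro e he
    rcases List.mem_append.mp he with h | h
    · exact ⟨(hrs e h).1, (hrs e h).2.1, (hrs e h).2.2.1⟩
    · refine ⟨(hrs' e h).1, ⟨⟨e.proc, (hrs'inv e h).2⟩, ?_⟩, (hrs'inv e h).2⟩
      intro q hq
      exact hnoresE e.op (hrs' e h).2.1 q hq
  · rw [hrs2, List.pairwise_append]
    refine ⟨hrsPW, hrs'PW, ?_⟩
    intro x hx y hy hxy
    have hxF : x ∈ F := hrsF x hx
    have hxres : x = Event.res x.proc x.op := Event.eq_res (hrs x hx).1
    obtain ⟨-, hnr⟩ := (hrs' y hy).2.1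
    exact hnr x.proc (by rw [← hxy, ← hxres]; exact hxF)
  · intro p
    have hpr : proj ((E.filter keep ++ rs) ++ rs') p = proj (F ++ rs') p := by
      rw [proj_append (E.filter keep ++ rs) rs' p, hequiv p, proj_append]
    rw [hcompE2, ← hequivS p, hcompF, proj_filter, proj_filter, hpr]
  · intro a b hab
    rw [prec_iff_sublist] at hab
    obtain ⟨p, q, hsub⟩ := hab
    rw [hcompE2] at hsub
    have hPb : P (Event.inv q b) = true :=
      List.of_mem_filter (hsub.subset (by simp))
    have hsub2 : List.Sublist [Event.res p a, Event.inv q b] ((E.filter keep ++ rs) ++ rs') :=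
      hsub.trans List.filter_sublist
    rw [List.sublist_append_iff] at hsub2
    obtain ⟨l1, l2, heq12, h1, h2⟩ := hsub2
    rcases l1 with _ | ⟨e1, l1⟩
    · rw [List.nil_append] at heq12
      have hmem : Event.inv q b ∈ rs' := h2.subset (by rw [← heq12]; simp)
      exact absurd (hrs' _ hmem).1 (by simp [Event.isInv])
    · rcases l1 with _ | ⟨e2, l1⟩
      · simp only [List.cons_append, List.nil_append, List.cons.injEq] at heq12
        obtain ⟨he1, hl2⟩ := heq12
        have hmem : Event.inv q b ∈ rs' := h2.subset (by rw [← hl2]; simp)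
        exact absurd (hrs' _ hmem).1 (by simp [Event.isInv])
      · simp only [List.cons_append, List.cons.injEq] at heq12
        obtain ⟨he1, he2, hrest⟩ := heq12
        obtain ⟨hl1, -⟩ := List.append_eq_nil_iff.mp hrest.symm
        rw [← he1, ← he2, hl1] at h1
        have hpF := hprec a b (prec_iff_sublist.mpr ⟨p, q, h1⟩)
        obtain ⟨p', q', hsubF⟩ := prec_iff_sublist.mp hpF
        have hPb' : P (Event.inv q' b) = true := by
          rw [hPdef] at hPb ⊢
          simpa [Event.isInv, Event.op] using hPb
        have hfilt : [Event.res p' a, Event.inv q' b].filter P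
            = [Event.res p' a, Event.inv q' b] := by
          simp [List.filter_cons, hPres (Event.res p' a) rfl, hPb']
        have hsubF' : List.Sublist [Event.res p' a, Event.inv q' b] (comp (F ++ rs')) := by
          rw [hcompF, ← hfilt]
          exact List.Sublist.filter P (hsubF.trans (List.sublist_append_left F rs'))
        exact hprecS a b (prec_iff_sublist.mpr ⟨p', q', hsubF'⟩)

end RV
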